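/- Let p be a prime and let f : ℤ_p → ℤ_p be a compatible function. Then f is ergodic with respect to the normalized Haar measure μ_p on ℤ_p if and only if f is transitive modulo p^k for every k = 1, 2, 3, … -/

import Mathlib

open MeasureTheory Filter
open scoped ENNReal

/-- Borel measurable structure on the `p`-adic integers. -/
noncomputable instance padicMS (p : ℕ) [Fact p.Prime] : MeasurableSpace ℤ_[p] := borel _

instance padicBS (p : ℕ) [Fact p.Prime] : BorelSpace ℤ_[p] := ⟨rfl⟩

/-- The Haar measure `μ_p` on `ℤ_p`, normalized so that `μ_p(ℤ_p) = 1`. -/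
noncomputable def padicHaar (p : ℕ) [Fact p.Prime] : Measure ℤ_[p] :=
  Measure.addHaarMeasure (⊤ : TopologicalSpace.PositiveCompacts ℤ_[p])

/-- The map `f̄_k : ℤ/p^kℤ → ℤ/p^kℤ` induced by `f : ℤ_p → ℤ_p` via reduction
modulo `p^k` (well-defined whenever `f` is compatible, i.e. 1-Lipschitz). -/
noncomputable def modMap (p : ℕ) [Fact p.Prime] (f : ℤ_[p] → ℤ_[p]) (k : ℕ) :
    ZMod (p ^ k) → ZMod (p ^ k) :=
  fun z => PadicInt.toZModPow k (f ((z.val : ℕ) : ℤ_[p]))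

/-- The map `F̄_k : (ℤ/p^kℤ)^n → (ℤ/p^kℤ)^m` induced by `F : ℤ_p^n → ℤ_p^m` via
coordinatewise reduction modulo `p^k` (well-defined whenever `F` is compatible). -/
noncomputable def modMapV (p : ℕ) [Fact p.Prime] {n m : ℕ}
    (F : (Fin n → ℤ_[p]) → (Fin m → ℤ_[p])) (k : ℕ) :
    (Fin n → ZMod (p ^ k)) → (Fin m → ZMod (p ^ k)) :=
  fun v i => PadicInt.toZModPow k (F (fun j => ((v j).val : ℤ_[p])) i)

/-- The sphere `S_{p^{-r}}(y) = {z : ‖z - y‖ = p^{-r}}` in `ℤ_p`. -/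
def padicSphere (p : ℕ) [Fact p.Prime] (y : ℤ_[p]) (r : ℕ) : Set ℤ_[p] :=
  {z : ℤ_[p] | ‖z - y‖ = (p : ℝ) ^ (-(r : ℤ))}

/-- The probability measure on the sphere `S_{p^{-r}}(y)`, obtained by restricting the
normalized Haar measure `μ_p` to the sphere and normalizing. -/
noncomputable def sphereMeasure (p : ℕ) [Fact p.Prime] (y : ℤ_[p]) (r : ℕ) : Measure ℤ_[p] :=
  (padicHaar p (padicSphere p y r))⁻¹ • (padicHaar p).restrict (padicSphere p y r)

/-- `f` is ergodic on the sphere `S_{p^{-r}}(y)`: it maps the sphere into itself, preserves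
the normalized restriction of the Haar measure to the sphere, and every invariant
measurable subset of the sphere has normalized measure `0` or `1`. -/
def ErgodicOnSphere (p : ℕ) [Fact p.Prime] (f : ℤ_[p] → ℤ_[p]) (y : ℤ_[p]) (r : ℕ) : Prop :=
  Set.MapsTo f (padicSphere p y r) (padicSphere p y r) ∧
  (∀ A : Set ℤ_[p], MeasurableSet A →
      sphereMeasure p y r (f ⁻¹' A) = sphereMeasure p y r A) ∧
  (∀ A : Set ℤ_[p], MeasurableSet A → A ⊆ padicSphere p y r →
      f ⁻¹' A ∩ padicSphere p y r = A →
      sphereMeasure p y r A = 0 ∨ sphereMeasure p y r A = 1)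

/-- `d ∈ ℤ_p` is primitive modulo `p²`: its image in `ℤ/p²ℤ` generates the whole
group of units `(ℤ/p²ℤ)ˣ`. -/
def PrimitiveModSq (p : ℕ) [Fact p.Prime] (d : ℤ_[p]) : Prop :=
  ∃ u : (ZMod (p ^ 2))ˣ, (u : ZMod (p ^ 2)) = PadicInt.toZModPow 2 d ∧
    ∀ v : (ZMod (p ^ 2))ˣ, v ∈ Subgroup.zpowers u

section Aux
variable (p : ℕ) [Fact p.Prime]

def pball (k : ℕ) (a : ZMod (p ^ k)) : Set ℤ_[p] := PadicInt.toZModPow k ⁻¹' {a}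

lemma toZModPow_eq_iff (k : ℕ) (x y : ℤ_[p]) :
    PadicInt.toZModPow k x = PadicInt.toZModPow k y ↔ ‖x - y‖ ≤ (p : ℝ) ^ (-(k:ℤ)) := by
  rw [PadicInt.norm_le_pow_iff_mem_span_pow, ← PadicInt.ker_toZModPow, RingHom.mem_ker,
    map_sub, sub_eq_zero]

lemma toZModPow_val (k : ℕ) (a : ZMod (p ^ k)) :
    PadicInt.toZModPow k ((a.val : ℕ) : ℤ_[p]) = a := by
  rw [map_natCast, ZMod.natCast_val, ZMod.cast_id]

lemma pball_eq_closedBall (k : ℕ) (a : ZMod (p ^ k)) :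
    pball p k a = Metric.closedBall ((a.val : ℕ) : ℤ_[p]) ((p : ℝ) ^ (-(k:ℤ))) := by
  ext x
  simp only [pball, Set.mem_preimage, Set.mem_singleton_iff, Metric.mem_closedBall,
    dist_eq_norm]
  rw [← toZModPow_eq_iff, toZModPow_val]

lemma measurableSet_pball (k : ℕ) (a : ZMod (p ^ k)) : MeasurableSet (pball p k a) := by
  rw [pball_eq_closedBall]; exact measurableSet_closedBall

lemma pball_disjoint (k : ℕ) {a b : ZMod (p ^ k)} (h : a ≠ b) :
    Disjoint (pball p k a) (pball p k b) :=
  Disjoint.preimage _ (by simpa using h)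

instance : IsProbabilityMeasure (padicHaar p) := by
  constructor
  have : (⊤ : TopologicalSpace.PositiveCompacts ℤ_[p]).carrier = Set.univ := rfl
  rw [padicHaar, ← this]
  exact Measure.addHaarMeasure_self

end Aux
section Aux2
variable (p : ℕ) [Fact p.Prime]

lemma preimage_add_pball (k : ℕ) (a b : ZMod (p ^ k)) (c : ℤ_[p]) :
    (fun x => c + x) ⁻¹' pball p k b = pball p k (b - PadicInt.toZModPow k c) := by
  ext x
  simp only [pball, Set.mem_preimage, Set.mem_singleton_iff, map_add]
  constructor
  · intro h; rw [← h]; ring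
  · intro h; rw [h]; ring

lemma iUnion_pball (k : ℕ) : (⋃ a : ZMod (p ^ k), pball p k a) = Set.univ := by
  ext x; simp [pball]

instance padicHaar_invariant : (padicHaar p).IsAddLeftInvariant :=
  Measure.isAddLeftInvariant_addHaarMeasure _

lemma pball_measure_const (k : ℕ) (a : ZMod (p ^ k)) :
    padicHaar p (pball p k a) = padicHaar p (pball p k 0) := by
  have := measure_preimage_add (padicHaar p) (((a.val : ℕ) : ℤ_[p])) (pball p k a)
  rw [preimage_add_pball p k a a, toZModPow_val p k a, sub_self] at this
  exact this.symm

lemma card_zmod (k : ℕ) : Fintype.card (ZMod (p ^ k)) = p ^ k := by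
  haveI : NeZero (p ^ k) := ⟨pow_ne_zero k (Fact.out (p := p.Prime)).ne_zero⟩
  exact ZMod.card _

lemma pball_measure (k : ℕ) (a : ZMod (p ^ k)) :
    padicHaar p (pball p k a) = ((p ^ k : ℕ) : ℝ≥0∞)⁻¹ := by
  have hpk0 : ((p ^ k : ℕ) : ℝ≥0∞) ≠ 0 := by
    exact_mod_cast Nat.cast_ne_zero.2 (pow_ne_zero k (Fact.out (p := p.Prime)).ne_zero)
  have hpkt : ((p ^ k : ℕ) : ℝ≥0∞) ≠ ⊤ := ENNReal.natCast_ne_top _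
  have hsum : (1 : ℝ≥0∞) = ∑' a : ZMod (p ^ k), padicHaar p (pball p k a) := by
    rw [← measure_iUnion (fun a b hab => pball_disjoint p k hab) (measurableSet_pball p k),
      iUnion_pball]
    exact (measure_univ).symm
  rw [tsum_fintype] at hsum
  have : ∀ b : ZMod (p ^ k), padicHaar p (pball p k b) = padicHaar p (pball p k 0) :=
    pball_measure_const p k
  rw [Finset.sum_congr rfl (fun b _ => this b), Finset.sum_const, Finset.card_univ,
    card_zmod] at hsum
  rw [pball_measure_const]
  have h2 : ((p ^ k : ℕ) : ℝ≥0∞) * padicHaar p (pball p k 0) = 1 := by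
    rw [hsum]; simp [nsmul_eq_mul]
  rw [← one_mul (padicHaar p (pball p k 0)), ← ENNReal.inv_mul_cancel hpk0 hpkt, mul_assoc, h2,
    mul_one]

lemma measure_preimage_toZModPow (k : ℕ) (S : Set (ZMod (p ^ k))) :
    padicHaar p (PadicInt.toZModPow k ⁻¹' S) = S.ncard * ((p ^ k : ℕ) : ℝ≥0∞)⁻¹ := by
  classical
  have hU : PadicInt.toZModPow k ⁻¹' S = ⋃ a ∈ S.toFinite.toFinset, pball p k a := by
    ext x
    simp only [pball, Set.mem_preimage, Set.mem_iUnion, Set.Finite.mem_toFinset,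
      Set.mem_singleton_iff]
    exact ⟨fun h => ⟨_, h, rfl⟩, fun ⟨a, ha, h⟩ => h ▸ ha⟩
  rw [hU, measure_biUnion_finset (fun a _ b _ hab => pball_disjoint p k hab)
    (fun a _ => measurableSet_pball p k a)]
  rw [Finset.sum_congr rfl (fun b _ => pball_measure p k b), Finset.sum_const,
    Set.ncard_eq_toFinset_card _ S.toFinite, nsmul_eq_mul]

end Aux2

section Aux3
variable (p : ℕ) [Fact p.Prime]
variable (f : ℤ_[p] → ℤ_[p])

lemma modMap_comm (hf : ∀ x y : ℤ_[p], ‖f x - f y‖ ≤ ‖x - y‖) (k : ℕ) (x : ℤ_[p]) :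
    modMap p f k (PadicInt.toZModPow k x) = PadicInt.toZModPow k (f x) := by
  unfold modMap
  rw [toZModPow_eq_iff]
  refine le_trans (hf _ _) ?_
  rw [← toZModPow_eq_iff, toZModPow_val]

lemma preimage_pre (hf : ∀ x y : ℤ_[p], ‖f x - f y‖ ≤ ‖x - y‖) (k : ℕ) (S : Set (ZMod (p ^ k))) :
    f ⁻¹' (PadicInt.toZModPow k ⁻¹' S) = PadicInt.toZModPow k ⁻¹' (modMap p f k ⁻¹' S) := by
  ext x
  simp only [Set.mem_preimage, modMap_comm p f hf k x]



/-- the generating family of balls -/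
def ballFam : Set (Set ℤ_[p]) := {s | ∃ k : ℕ, ∃ a : ZMod (p ^ k), s = pball p k a}

lemma pball_subset (k l : ℕ) (hkl : k ≤ l) (a : ZMod (p ^ k)) (b : ZMod (p ^ l))
    (h : (pball p k a ∩ pball p l b).Nonempty) : pball p l b ⊆ pball p k a := by
  obtain ⟨x, hxa, hxb⟩ := h
  simp only [pball, Set.mem_preimage, Set.mem_singleton_iff] at hxa hxb
  intro y hy
  simp only [pball, Set.mem_preimage, Set.mem_singleton_iff] at hy ⊢
  have h1 : ZMod.cast (PadicInt.toZModPow l y) = PadicInt.toZModPow k y :=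
    PadicInt.cast_toZModPow k l hkl y
  have h2 : ZMod.cast (PadicInt.toZModPow l x) = PadicInt.toZModPow k x :=
    PadicInt.cast_toZModPow k l hkl x
  rw [hy] at h1; rw [hxb] at h2; rw [hxa] at h2
  rw [← h1, h2]

lemma isPiSystem_ballFam : IsPiSystem (ballFam p) := by
  rintro s ⟨k, a, rfl⟩ t ⟨l, b, rfl⟩ hne
  rcases le_total k l with hkl | hlk
  · have := pball_subset p k l hkl a b hne
    rw [Set.inter_eq_self_of_subset_right this]
    exact ⟨l, b, rfl⟩
  · have := pball_subset p l k hlk b a (by rwa [Set.inter_comm] at hne)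
    rw [Set.inter_eq_self_of_subset_left this]
    exact ⟨k, a, rfl⟩

lemma padic_exists_pow_lt (ε : ℝ) (hε : 0 < ε) : ∃ k : ℕ, (p : ℝ) ^ (-(k:ℤ)) < ε := by
  have hp1 : (1:ℝ) < (p:ℝ) := by
    exact_mod_cast (Fact.out (p := p.Prime)).one_lt
  obtain ⟨k, hk⟩ := exists_pow_lt_of_lt_one hε (by
    rw [inv_lt_one_iff₀]; right; exact hp1 : (p:ℝ)⁻¹ < 1)
  exact ⟨k, by rwa [zpow_neg, zpow_natCast, ← inv_pow]⟩

lemma borel_eq_generateFrom_ballFam :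
    (padicMS p : MeasurableSpace ℤ_[p]) = MeasurableSpace.generateFrom (ballFam p) := by
  apply le_antisymm
  · show MeasurableSpace.generateFrom {s : Set ℤ_[p] | IsOpen s} ≤ _
    apply MeasurableSpace.generateFrom_le
    intro U hU
    rw [Set.mem_setOf_eq] at hU
    have : U = ⋃ k : ℕ, ⋃ a : ZMod (p ^ k), ⋃ (_ : pball p k a ⊆ U), pball p k a := by
      apply Set.Subset.antisymm
      · intro x hx
        obtain ⟨ε, hε, hεU⟩ := Metric.isOpen_iff.1 hU x hx
        obtain ⟨k, hk⟩ := padic_exists_pow_lt p ε hε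
        refine Set.mem_iUnion.2 ⟨k, Set.mem_iUnion.2 ⟨PadicInt.toZModPow k x,
          Set.mem_iUnion.2 ⟨?_, rfl⟩⟩⟩
        intro y hy
        apply hεU
        simp only [pball, Set.mem_preimage, Set.mem_singleton_iff] at hy
        rw [Metric.mem_ball, dist_eq_norm]
        calc ‖y - x‖ ≤ (p:ℝ) ^ (-(k:ℤ)) := (toZModPow_eq_iff p k y x).1 hy
        _ < ε := hk
      · exact Set.iUnion_subset fun k => Set.iUnion_subset fun a => Set.iUnion_subset fun h => h
    rw [this]
    exact MeasurableSet.iUnion fun k => MeasurableSet.iUnion fun a => MeasurableSet.iUnion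
      fun _ => MeasurableSpace.measurableSet_generateFrom ⟨k, a, rfl⟩
  · apply MeasurableSpace.generateFrom_le
    rintro s ⟨k, a, rfl⟩
    exact measurableSet_pball p k a

lemma f_measurable (hf : ∀ x y : ℤ_[p], ‖f x - f y‖ ≤ ‖x - y‖) : Measurable f := by
  have : LipschitzWith 1 f := by
    have h1 : Real.toNNReal 1 = 1 := by simp
    rw [← h1]
    apply LipschitzWith.of_dist_le' (K := 1)
    intro x y
    rw [one_mul, dist_eq_norm, dist_eq_norm]
    exact hf x y
  exact this.continuous.measurable

end Aux3

section Aux4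
variable (p : ℕ) [Fact p.Prime]
variable (f : ℤ_[p] → ℤ_[p])

lemma enn_cancel {a b c : ℝ≥0∞} (hc0 : c ≠ 0) (hct : c ≠ ⊤) (h : a * c = b * c) : a = b := by
  have h2 := congrArg (· * c⁻¹) h
  simpa [mul_assoc, ENNReal.mul_inv_cancel hc0 hct] using h2

lemma pk_ne_zero (k : ℕ) : ((p ^ k : ℕ) : ℝ≥0∞) ≠ 0 := by
  exact_mod_cast Nat.cast_ne_zero.2 (pow_ne_zero k (Fact.out (p := p.Prime)).ne_zero)

lemma pk_ne_top (k : ℕ) : ((p ^ k : ℕ) : ℝ≥0∞) ≠ ⊤ := ENNReal.natCast_ne_top _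

lemma inv_pk_ne_zero (k : ℕ) : ((p ^ k : ℕ) : ℝ≥0∞)⁻¹ ≠ 0 :=
  ENNReal.inv_ne_zero.2 (pk_ne_top p k)

lemma inv_pk_ne_top (k : ℕ) : ((p ^ k : ℕ) : ℝ≥0∞)⁻¹ ≠ ⊤ :=
  ENNReal.inv_ne_top.2 (pk_ne_zero p k)

lemma measurable_preimage_toZModPow (k : ℕ) (S : Set (ZMod (p ^ k))) :
    MeasurableSet (PadicInt.toZModPow k ⁻¹' S) := by
  have : (PadicInt.toZModPow k ⁻¹' S : Set ℤ_[p]) =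
      ⋃ a : ZMod (p ^ k), ⋃ (_ : a ∈ S), pball p k a := by
    ext x
    simp only [Set.mem_preimage, Set.mem_iUnion, pball, Set.mem_singleton_iff]
    exact ⟨fun h => ⟨_, h, rfl⟩, fun ⟨a, ha, h⟩ => h ▸ ha⟩
  rw [this]
  exact MeasurableSet.iUnion fun a => MeasurableSet.iUnion fun _ => measurableSet_pball p k a

/-- transitivity mod `p^k` for every `k` (extended to `k = 0` trivially). -/
lemma trans_all (htr : ∀ k : ℕ, 1 ≤ k → ∀ x z : ZMod (p ^ k), ∃ n : ℕ, (modMap p f k)^[n] x = z) :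
    ∀ k : ℕ, ∀ x z : ZMod (p ^ k), ∃ n : ℕ, (modMap p f k)^[n] x = z := by
  intro k
  rcases Nat.eq_zero_or_pos k with rfl | hk
  · haveI : Subsingleton (ZMod (p ^ 0)) := by rw [pow_zero]; infer_instance
    intro x z; exact ⟨0, Subsingleton.elim _ _⟩
  · exact htr k hk

lemma modMap_bijective (k : ℕ)
    (h : ∀ x z : ZMod (p ^ k), ∃ n : ℕ, (modMap p f k)^[n] x = z) :
    Function.Bijective (modMap p f k) := by
  rw [← Finite.surjective_iff_bijective]
  intro z
  obtain ⟨n, hn⟩ := h (modMap p f k z) z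
  refine ⟨(modMap p f k)^[n] z, ?_⟩
  rw [← Function.iterate_succ_apply' (modMap p f k) n z, Function.iterate_succ_apply]
  exact hn

lemma preimage_singleton_modMap (k : ℕ) (hbij : Function.Bijective (modMap p f k))
    (b : ZMod (p ^ k)) :
    modMap p f k ⁻¹' {b} = {(Equiv.ofBijective _ hbij).symm b} := by
  ext a
  simp only [Set.mem_preimage, Set.mem_singleton_iff]
  constructor
  · intro h; exact ((Equiv.ofBijective _ hbij).symm_apply_eq.2 h.symm).symm
  · intro h; rw [h]
    exact ((Equiv.ofBijective _ hbij).apply_symm_apply b)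

lemma map_measure_eq (hf : ∀ x y : ℤ_[p], ‖f x - f y‖ ≤ ‖x - y‖)
    (hbij : ∀ k, Function.Bijective (modMap p f k)) :
    Measure.map f (padicHaar p) = padicHaar p := by
  haveI : IsFiniteMeasure (Measure.map f (padicHaar p)) := by
    constructor
    rw [Measure.map_apply (f_measurable p f hf) MeasurableSet.univ, Set.preimage_univ]
    exact measure_lt_top _ _
  apply ext_of_generate_finite (ballFam p) (borel_eq_generateFrom_ballFam p)
    (isPiSystem_ballFam p)
  · rintro s ⟨k, a, rfl⟩
    rw [Measure.map_apply (f_measurable p f hf) (measurableSet_pball p k a)]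
    have h1 : f ⁻¹' pball p k a = PadicInt.toZModPow k ⁻¹' (modMap p f k ⁻¹' {a}) :=
      preimage_pre p f hf k {a}
    rw [h1, measure_preimage_toZModPow, preimage_singleton_modMap p f k (hbij k) a,
      Set.ncard_singleton, pball_measure]
    simp
  · rw [Measure.map_apply (f_measurable p f hf) MeasurableSet.univ, Set.preimage_univ]

end Aux4

section Main
variable (p : ℕ) [Fact p.Prime] (f : ℤ_[p] → ℤ_[p])

lemma inter_pball_const (hf : ∀ x y : ℤ_[p], ‖f x - f y‖ ≤ ‖x - y‖)
    (hbij : ∀ k, Function.Bijective (modMap p f k))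
    (htr : ∀ k : ℕ, ∀ x z : ZMod (p ^ k), ∃ n : ℕ, (modMap p f k)^[n] x = z)
    (A : Set ℤ_[p]) (hA : MeasurableSet A) (hinv : f ⁻¹' A = A)
    (k : ℕ) (a : ZMod (p ^ k)) :
    padicHaar p (A ∩ pball p k a) = padicHaar p (pball p k a) * padicHaar p A := by
  have hmap := map_measure_eq p f hf hbij
  have hpre : ∀ B : Set ℤ_[p], MeasurableSet B → padicHaar p (f ⁻¹' B) = padicHaar p B := by
    intro B hB
    rw [← Measure.map_apply (f_measurable p f hf) hB, hmap]
  have step : ∀ b : ZMod (p ^ k),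
      padicHaar p (A ∩ pball p k (modMap p f k b)) = padicHaar p (A ∩ pball p k b) := by
    intro b
    have hm : MeasurableSet (A ∩ pball p k (modMap p f k b)) :=
      hA.inter (measurableSet_pball p k _)
    have hfix := hpre _ hm
    have hps : f ⁻¹' (A ∩ pball p k (modMap p f k b)) = A ∩ pball p k b := by
      rw [Set.preimage_inter, hinv]
      congr 1
      have h1 : f ⁻¹' pball p k (modMap p f k b) =
          PadicInt.toZModPow k ⁻¹' (modMap p f k ⁻¹' {modMap p f k b}) :=
        preimage_pre p f hf k _
      have h2 : modMap p f k ⁻¹' {modMap p f k b} = {b} := by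
        ext y; simp only [Set.mem_preimage, Set.mem_singleton_iff]
        exact ⟨fun h => (hbij k).1 h, fun h => by rw [h]⟩
      rw [h1, h2]; rfl
    rw [hps] at hfix
    exact hfix.symm
  have iter : ∀ n : ℕ, ∀ b, padicHaar p (A ∩ pball p k ((modMap p f k)^[n] b)) =
      padicHaar p (A ∩ pball p k b) := by
    intro n
    induction n with
    | zero => intro b; rfl
    | succ n ih => intro b; rw [Function.iterate_succ_apply', step, ih]
  have hconst : ∀ b c : ZMod (p ^ k),
      padicHaar p (A ∩ pball p k b) = padicHaar p (A ∩ pball p k c) := by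
    intro b c
    obtain ⟨n, hn⟩ := htr k c b
    rw [← hn, iter]
  have hsum : padicHaar p A = ∑ b : ZMod (p ^ k), padicHaar p (A ∩ pball p k b) := by
    have hcup : A = ⋃ b : ZMod (p ^ k), A ∩ pball p k b := by
      rw [← Set.inter_iUnion, iUnion_pball, Set.inter_univ]
    conv_lhs => rw [hcup]
    rw [measure_iUnion (fun b c hbc =>
        ((pball_disjoint p k hbc).mono Set.inter_subset_right Set.inter_subset_right))
      (fun b => hA.inter (measurableSet_pball p k b)), tsum_fintype]
  rw [Finset.sum_congr rfl (fun b _ => hconst b a), Finset.sum_const, Finset.card_univ,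
    card_zmod, nsmul_eq_mul] at hsum
  rw [pball_measure, hsum, ← mul_assoc, ENNReal.inv_mul_cancel (pk_ne_zero p k) (pk_ne_top p k),
    one_mul]

theorem ergodic_iff_transitive_mod' (hf : ∀ x y : ℤ_[p], ‖f x - f y‖ ≤ ‖x - y‖) :
    ((∀ A : Set ℤ_[p], MeasurableSet A → padicHaar p (f ⁻¹' A) = padicHaar p A) ∧
      (∀ A : Set ℤ_[p], MeasurableSet A → f ⁻¹' A = A →
        padicHaar p A = 0 ∨ padicHaar p A = 1)) ↔
      ∀ k : ℕ, 1 ≤ k → ∀ x z : ZMod (p ^ k), ∃ n : ℕ, (modMap p f k)^[n] x = z := by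
  constructor
  · rintro ⟨h1, h2⟩ k _hk x z
    -- the induced map is bijective
    have hfib : ∀ b : ZMod (p ^ k), ∃ a, modMap p f k ⁻¹' {b} = {a} := by
      intro b
      have e1 : padicHaar p (f ⁻¹' pball p k b) = ((p ^ k : ℕ) : ℝ≥0∞)⁻¹ := by
        rw [h1 _ (measurableSet_pball p k b), pball_measure]
      have e2 : padicHaar p (f ⁻¹' pball p k b) =
          (modMap p f k ⁻¹' {b}).ncard * ((p ^ k : ℕ) : ℝ≥0∞)⁻¹ := by
        rw [show pball p k b = PadicInt.toZModPow k ⁻¹' {b} from rfl,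
          preimage_pre p f hf k {b}, measure_preimage_toZModPow]
      have e3 : ((modMap p f k ⁻¹' {b}).ncard : ℝ≥0∞) * ((p ^ k : ℕ) : ℝ≥0∞)⁻¹ =
          (1 : ℝ≥0∞) * ((p ^ k : ℕ) : ℝ≥0∞)⁻¹ := by
        rw [← e2, e1, one_mul]
      have e4 : ((modMap p f k ⁻¹' {b}).ncard : ℝ≥0∞) = ((1 : ℕ) : ℝ≥0∞) := by
        simpa using enn_cancel (inv_pk_ne_zero p k) (inv_pk_ne_top p k) e3
      have e5 : (modMap p f k ⁻¹' {b}).ncard = 1 := by exact_mod_cast e4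
      exact Set.ncard_eq_one.1 e5
    have hinj : Function.Injective (modMap p f k) := by
      intro a b hab
      obtain ⟨c, hc⟩ := hfib (modMap p f k a)
      have ha : a ∈ modMap p f k ⁻¹' {modMap p f k a} := rfl
      have hb : b ∈ modMap p f k ⁻¹' {modMap p f k a} := by
        simp only [Set.mem_preimage, Set.mem_singleton_iff, hab]
      rw [hc] at ha hb
      rw [Set.mem_singleton_iff.1 ha, Set.mem_singleton_iff.1 hb]
    -- the orbit of x
    set σ := modMap p f k with hσ
    set O : Set (ZMod (p ^ k)) := Set.range fun n : ℕ => σ^[n] x with hO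
    have hxO : x ∈ O := ⟨0, rfl⟩
    have himg : σ '' O = O := by
      apply Set.eq_of_subset_of_ncard_le
      · rintro _ ⟨_, ⟨n, rfl⟩, rfl⟩
        exact ⟨n + 1, Function.iterate_succ_apply' σ n x⟩
      · rw [Set.ncard_image_of_injective O hinj]
      · exact O.toFinite
    have hpreO : σ ⁻¹' O = O := by
      conv_lhs => rw [← himg]
      exact Set.preimage_image_eq O hinj
    set A : Set ℤ_[p] := PadicInt.toZModPow k ⁻¹' O with hA
    have hAm : MeasurableSet A := measurable_preimage_toZModPow p k O
    have hAinv : f ⁻¹' A = A := by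
      rw [hA, preimage_pre p f hf k O, hpreO]
    have hμA : padicHaar p A = O.ncard * ((p ^ k : ℕ) : ℝ≥0∞)⁻¹ := by
      rw [hA, measure_preimage_toZModPow]
    have hne : padicHaar p A ≠ 0 := by
      rw [hμA]
      apply mul_ne_zero _ (inv_pk_ne_zero p k)
      have hO0 : O.ncard ≠ 0 := ((Set.ncard_pos O.toFinite).2 ⟨x, hxO⟩).ne'
      exact_mod_cast hO0
    have hone : padicHaar p A = 1 := (h2 A hAm hAinv).resolve_left hne
    have hcard : (O.ncard : ℝ≥0∞) = ((p ^ k : ℕ) : ℝ≥0∞) := by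
      apply enn_cancel (inv_pk_ne_zero p k) (inv_pk_ne_top p k)
      rw [← hμA, hone, ENNReal.mul_inv_cancel (pk_ne_zero p k) (pk_ne_top p k)]
    have hcard' : O.ncard = p ^ k := by exact_mod_cast hcard
    have hOuniv : O = Set.univ := by
      apply Set.eq_of_subset_of_ncard_le (Set.subset_univ O) _ Set.finite_univ
      exact le_of_eq (by rw [Set.ncard_univ, Nat.card_eq_fintype_card, card_zmod, hcard'])
    have hzO : z ∈ O := by rw [hOuniv]; trivial
    exact hzO
  · intro htr
    have htr' := trans_all p f htr
    have hbij : ∀ k, Function.Bijective (modMap p f k) :=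
      fun k => modMap_bijective p f k (htr' k)
    have hmap := map_measure_eq p f hf hbij
    have hpre : ∀ B : Set ℤ_[p], MeasurableSet B → padicHaar p (f ⁻¹' B) = padicHaar p B := by
      intro B hB
      rw [← Measure.map_apply (f_measurable p f hf) hB, hmap]
    refine ⟨hpre, ?_⟩
    intro A hAm hAinv
    have key := inter_pball_const p f hf hbij htr' A hAm hAinv
    have hext : (padicHaar p).restrict A = padicHaar p A • padicHaar p := by
      apply ext_of_generate_finite (ballFam p) (borel_eq_generateFrom_ballFam p)
        (isPiSystem_ballFam p)
      · rintro s ⟨k, a, rfl⟩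
        rw [Measure.restrict_apply (measurableSet_pball p k a), Set.inter_comm, key k a,
          Measure.smul_apply, smul_eq_mul, mul_comm]
      · rw [Measure.restrict_apply_univ, Measure.smul_apply, smul_eq_mul, measure_univ, mul_one]
    have heval : padicHaar p A = padicHaar p A * padicHaar p A := by
      have h := congrArg (fun m : Measure ℤ_[p] => m A) hext
      simpa [Measure.restrict_apply hAm, Set.inter_self, Measure.smul_apply, smul_eq_mul] using h
    rcases eq_or_ne (padicHaar p A) 0 with h0 | h0
    · exact Or.inl h0
    · right
      have htop : padicHaar p A ≠ ⊤ := measure_ne_top _ _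
      have : (1 : ℝ≥0∞) * padicHaar p A = padicHaar p A * padicHaar p A := by
        rw [one_mul]; exact heval
      exact (enn_cancel h0 htop this).symm

end Main

/-- A compatible (1-Lipschitz) function `f : ℤ_p → ℤ_p` is ergodic with respect to the
normalized Haar measure `μ_p` if and only if it is transitive modulo `p^k` (the induced
map on `ℤ/p^kℤ` is a single cycle permutation, equivalently every point reaches every
point under iteration) for every `k ≥ 1`. -/
theorem ergodic_iff_transitive_mod (p : ℕ) [Fact p.Prime]
    (f : ℤ_[p] → ℤ_[p]) (hf : ∀ x y : ℤ_[p], ‖f x - f y‖ ≤ ‖x - y‖) :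
    ((∀ A : Set ℤ_[p], MeasurableSet A → padicHaar p (f ⁻¹' A) = padicHaar p A) ∧
      (∀ A : Set ℤ_[p], MeasurableSet A → f ⁻¹' A = A →
        padicHaar p A = 0 ∨ padicHaar p A = 1)) ↔
      ∀ k : ℕ, 1 ≤ k → ∀ x z : ZMod (p ^ k), ∃ n : ℕ, (modMap p f k)^[n] x = z :=
  ergodic_iff_transitive_mod' p f hf
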